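/- Let t and N be natural numbers with N > 3t. Let V, W and C be multisets of real numbers with C ≤ V, C ≤ W (C is a sub-multiset of both), card(V) = card(W) = N and card(C) ≥ N − t. Let A (resp. B) be the multiset of entries of the t-trimmed list of V (resp. of W). Then the multiset intersection A ∩ B has cardinality at least N − 3t. -/

import Mathlib

lemma take_sublist_take_aux {α : Type*} {x y : List α} (h : x.Sublist y) (k : ℕ)
    (hk : k ≤ x.length) :
    (x.take k).Sublist (y.take (k + (y.length - x.length))) := by
  have hlen := h.length_le
  have h1 : (x.reverse.drop (x.length - k)).Sublist (y.reverse.drop (x.length - k)) :=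
    h.reverse.drop _
  rw [List.drop_reverse, List.drop_reverse] at h1
  have h2 := h1.reverse
  simp only [List.reverse_reverse] at h2
  have hx : x.length - (x.length - k) = k := by omega
  have hy : y.length - (x.length - k) = k + (y.length - x.length) := by omega
  rwa [hx, hy] at h2

lemma take_sublist_take_mono {α : Type*} (y : List α) {a b : ℕ} (hab : a ≤ b) :
    (y.take a).Sublist (y.take b) := by
  have h : y.take a = (y.take b).take a := by
    rw [List.take_take, Nat.min_eq_left hab]
  rw [h]
  exact List.take_sublist _ _

theorem trimmed_intersection_card (t N : ℕ) (hN : 3 * t < N)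
    (V W C : Multiset ℝ) (hCV : C ≤ V) (hCW : C ≤ W)
    (hV : Multiset.card V = N) (hW : Multiset.card W = N)
    (hC : N - t ≤ Multiset.card C) :
    N - 3 * t ≤ Multiset.card
      ((((V.sort (· ≤ ·)).drop t).take (N - 2 * t) : Multiset ℝ) ∩
       (((W.sort (· ≤ ·)).drop t).take (N - 2 * t) : Multiset ℝ)) := by
  set c := C.sort (· ≤ ·) with hc
  set v := V.sort (· ≤ ·) with hv
  set w := W.sort (· ≤ ·) with hw
  have hm : Multiset.card C = c.length := by
    rw [hc]; simp [Multiset.length_sort]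
  have hvlen : v.length = N := by rw [hv]; simp [Multiset.length_sort, hV]
  have hwlen : w.length = N := by rw [hw]; simp [Multiset.length_sort, hW]
  have hmN : c.length ≤ N := by
    have := Multiset.card_le_card hCV
    omega
  have hmc : N - t ≤ c.length := by omega
  -- sorted sublists
  have hsubV : c.Sublist v := by
    apply List.sublist_of_subperm_of_pairwise (r := (· ≤ ·))
    · rw [← Multiset.coe_le, hc, hv, Multiset.sort_eq, Multiset.sort_eq]; exact hCV
    · exact Multiset.pairwise_sort _ _
    · exact Multiset.pairwise_sort _ _
  have hsubW : c.Sublist w := by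
    apply List.sublist_of_subperm_of_pairwise (r := (· ≤ ·))
    · rw [← Multiset.coe_le, hc, hw, Multiset.sort_eq, Multiset.sort_eq]; exact hCW
    · exact Multiset.pairwise_sort _ _
    · exact Multiset.pairwise_sort _ _
  -- the common middle part
  set M : List ℝ := (c.drop t).take (N - 3 * t) with hM
  have key : ∀ (y : List ℝ), y.length = N → c.Sublist y →
      M.Sublist ((y.drop t).take (N - 2 * t)) := by
    intro y hy hsub
    have hd : (c.drop t).Sublist (y.drop t) := hsub.drop t
    have hk : N - 3 * t ≤ (c.drop t).length := by
      rw [List.length_drop]; omega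
    have h1 := take_sublist_take_aux hd (N - 3 * t) hk
    refine h1.trans (take_sublist_take_mono _ ?_)
    rw [List.length_drop, List.length_drop, hy]
    omega
  have hA : (M : Multiset ℝ) ≤ (((v.drop t).take (N - 2 * t) : List ℝ) : Multiset ℝ) :=
    Multiset.coe_le.mpr (key v hvlen hsubV).subperm
  have hB : (M : Multiset ℝ) ≤ (((w.drop t).take (N - 2 * t) : List ℝ) : Multiset ℝ) :=
    Multiset.coe_le.mpr (key w hwlen hsubW).subperm
  have hle := Multiset.card_le_card (Multiset.le_inter hA hB)
  have hMlen : (M : Multiset ℝ).card = N - 3 * t := by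
    simp only [Multiset.coe_card, hM, List.length_take, List.length_drop]
    omega
  omega
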